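/- The family of functions {Φ_{a,b}}_{0 < a < b}, where Φ_{a,b} is the circular transform of the right triangle T(a,b) = conv((0,0),(a,0),(a,√(b²−a²))), is linearly independent on (0, +∞): any finite vanishing linear combination Σ c_{a,b} Φ_{a,b} ≡ 0 on (0,∞) has all coefficients zero. -/

import Mathlib

open Real MeasureTheory

noncomputable abbrev E2 : Type := EuclideanSpace ℝ (Fin 2)

/-- The point `(a, b)` of the Euclidean plane. -/
noncomputable def pt2 (a b : ℝ) : E2 := (EuclideanSpace.equiv (Fin 2) ℝ).symm ![a, b]

/-- The circular transform of a set `S ⊆ ℝ²`: `R_S(ρ) = ∫₀^{2π} 1_S(ρ cos θ, ρ sin θ) dθ`. -/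
noncomputable def circTransform (S : Set E2) (ρ : ℝ) : ℝ :=
  ∫ θ in (0 : ℝ)..(2 * π), S.indicator (fun _ => (1 : ℝ)) (pt2 (ρ * cos θ) (ρ * sin θ))

/-- The right triangle `T(a,b) = conv((0,0), (a,0), (a, √(b² − a²)))`. -/
noncomputable def Tri (a b : ℝ) : Set E2 :=
  convexHull ℝ {pt2 0 0, pt2 a 0, pt2 a (Real.sqrt (b ^ 2 - a ^ 2))}

/-- `Φ_{a,b}`, the circular transform of the right triangle `T(a,b)`. -/
noncomputable def Phi (a b ρ : ℝ) : ℝ := circTransform (Tri a b) ρ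

lemma vand {ι : Type*} [DecidableEq ι] (S : Finset ι) (e : ι → ℝ) (x : ι → ℝ)
    (hinj : Set.InjOn x S) (h : ∀ k : ℕ, ∑ i ∈ S, e i * x i ^ k = 0) :
    ∀ i ∈ S, e i = 0 := by
  have hP : ∀ P : Polynomial ℝ, ∑ i ∈ S, e i * P.eval (x i) = 0 := by
    intro P
    have : ∀ i, P.eval (x i) = ∑ k ∈ Finset.range (P.natDegree + 1), P.coeff k * x i ^ k := by
      intro i; rw [Polynomial.eval_eq_sum_range]
    simp_rw [this, Finset.mul_sum, Finset.sum_comm (s := S)]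
    simp_rw [show ∀ i k, e i * (P.coeff k * x i ^ k) = P.coeff k * (e i * x i ^ k) by intros; ring]
    simp_rw [← Finset.mul_sum, h, mul_zero, Finset.sum_const_zero]
  intro i hi
  have := hP (Lagrange.basis S x i)
  rw [Finset.sum_eq_single i] at this
  · rwa [Lagrange.eval_basis_self hinj hi, mul_one] at this
  · intro j hj hne
    rw [Lagrange.eval_basis_of_ne (Ne.symm hne) hj, mul_zero]
  · intro h'; exact absurd hi h'

lemma key {ι : Type*} [DecidableEq ι] (S : Finset ι) (e : ι → ℝ) (s : ι → ℝ)
    (hinj : Set.InjOn s S) {u v : ℝ} (huv : u < v) (hs : ∀ i ∈ S, s i ≤ u)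
    (h : ∀ t ∈ Set.Ioo u v, ∑ i ∈ S, e i * (t - s i) ^ (-(1/2) : ℝ) = 0) :
    ∀ i ∈ S, e i = 0 := by
  set m : ℕ → ℝ := fun k => ∏ j ∈ Finset.range k, (-(1/2) - (j:ℝ)) with hm
  have hmne : ∀ k, m k ≠ 0 := by
    intro k
    apply Finset.prod_ne_zero_iff.2
    intro j _
    have : (0:ℝ) ≤ j := Nat.cast_nonneg j
    intro hc; nlinarith [hc]
  have main : ∀ k : ℕ, ∀ t ∈ Set.Ioo u v,
      ∑ i ∈ S, e i * (m k * (t - s i) ^ (-(1/2) - (k:ℝ) : ℝ)) = 0 := by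
    intro k
    induction k with
    | zero =>
      intro t ht
      have h0 := h t ht
      have : ∀ i, (m 0 : ℝ) * (t - s i) ^ (-(1/2) - ((0:ℕ):ℝ) : ℝ) = (t - s i) ^ (-(1/2):ℝ) := by
        intro i; simp [hm]
      simp_rw [this]
      exact h0
    | succ k ih =>
      intro t ht
      set f : ℝ → ℝ := fun t => ∑ i ∈ S, e i * (m k * (t - s i) ^ (-(1/2) - (k:ℝ) : ℝ)) with hf
      have hder : HasDerivAt f
          (∑ i ∈ S, e i * (m (k+1) * (t - s i) ^ (-(1/2) - ((k:ℝ)+1) : ℝ))) t := by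
        apply HasDerivAt.fun_sum
        intro i hi
        have hpos : (0:ℝ) < t - s i := by
          have := hs i hi; have := ht.1; linarith
        have hbase : HasDerivAt (fun t : ℝ => t - s i) 1 t := (hasDerivAt_id t).sub_const (s i)
        have h1 : HasDerivAt (fun t : ℝ => (t - s i) ^ (-(1/2) - (k:ℝ) : ℝ))
            ((-(1/2) - (k:ℝ)) * (t - s i) ^ ((-(1/2) - (k:ℝ)) - 1) * 1) t :=
          by have := (Real.hasDerivAt_rpow_const (p := -(1/2) - (k:ℝ)) (Or.inl (ne_of_gt hpos))).comp t hbase; exact this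
        have h2 := (h1.const_mul (m k)).const_mul (e i)
        refine HasDerivAt.congr_deriv h2 ?_
        have hms : m (k+1) = m k * (-(1/2) - (k:ℝ)) := Finset.prod_range_succ _ k
        have hexp : ((-(1/2) - (k:ℝ)) - 1 : ℝ) = -(1/2) - ((k:ℝ)+1) := by ring
        rw [hms, hexp]
        push_cast
        ring
      have hzero : f =ᶠ[nhds t] (fun _ => 0) := by
        filter_upwards [isOpen_Ioo.mem_nhds ht] with y hy
        exact ih y hy
      have hd0 := hzero.deriv_eq
      rw [hder.deriv] at hd0
      simp only [deriv_const] at hd0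
      have : ((k:ℝ)+1) = ((k+1 : ℕ) : ℝ) := by push_cast; ring
      rw [← this]
      exact hd0
  set t₀ := (u + v) / 2 with ht₀
  have ht₀mem : t₀ ∈ Set.Ioo u v := ⟨by rw [ht₀]; linarith, by rw [ht₀]; linarith⟩
  have hvand : ∀ k : ℕ, ∑ i ∈ S, (e i * (t₀ - s i) ^ (-(1/2) : ℝ)) * ((t₀ - s i)⁻¹) ^ k = 0 := by
    intro k
    have h0 := main k t₀ ht₀mem
    have h1 : ∑ i ∈ S, (m k)⁻¹ * (e i * (m k * (t₀ - s i) ^ (-(1/2) - (k:ℝ) : ℝ))) = 0 := by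
      rw [← Finset.mul_sum, h0, mul_zero]
    rw [← h1]
    apply Finset.sum_congr rfl
    intro i hi
    have hpos : (0:ℝ) < t₀ - s i := by
      have := hs i hi; have := ht₀mem.1; linarith
    have e1 : (t₀ - s i) ^ (-(1/2) - (k:ℝ) : ℝ)
        = (t₀ - s i) ^ (-(1/2) : ℝ) * ((t₀ - s i)⁻¹) ^ k := by
      rw [show (-(1/2) - (k:ℝ) : ℝ) = -(1/2) + (-(k:ℝ)) by ring, Real.rpow_add hpos]
      congr 1
      rw [Real.rpow_neg hpos.le, Real.rpow_natCast, inv_pow]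
    rw [e1]
    have : (m k)⁻¹ * (e i * (m k * ((t₀ - s i) ^ (-(1/2):ℝ) * ((t₀ - s i)⁻¹) ^ k)))
        = ((m k)⁻¹ * m k) * (e i * ((t₀ - s i) ^ (-(1/2):ℝ) * ((t₀ - s i)⁻¹) ^ k)) := by ring
    rw [this, inv_mul_cancel₀ (hmne k), one_mul, mul_assoc]
  have hinj' : Set.InjOn (fun i => (t₀ - s i)⁻¹) S := by
    intro i hi j hj hij
    simp only at hij
    have hi' : (0:ℝ) < t₀ - s i := by have := hs i hi; have := ht₀mem.1; linarith
    have hj' : (0:ℝ) < t₀ - s j := by have := hs j hj; have := ht₀mem.1; linarith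
    have : t₀ - s i = t₀ - s j := by
      have := congrArg (·⁻¹) hij
      simpa [inv_inv] using this
    exact hinj hi hj (by linarith)
  have hv := vand S (fun i => e i * (t₀ - s i) ^ (-(1/2) : ℝ)) (fun i => (t₀ - s i)⁻¹) hinj' hvand
  intro i hi
  have h0 := hv i hi
  have hpos : (0:ℝ) < t₀ - s i := by have := hs i hi; have := ht₀mem.1; linarith
  have hne : (t₀ - s i) ^ (-(1/2) : ℝ) ≠ 0 := by positivity
  exact (mul_eq_zero.1 h0).resolve_right hne

lemma mem_Tri {a b : ℝ} (ha : 0 < a) (hab : a < b) (x y : ℝ) :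
    pt2 x y ∈ Tri a b ↔ 0 ≤ y ∧ a * y ≤ Real.sqrt (b ^ 2 - a ^ 2) * x ∧ x ≤ a := by
  set h := Real.sqrt (b ^ 2 - a ^ 2) with hh
  have hhpos : 0 < h := Real.sqrt_pos.2 (by nlinarith)
  constructor
  · intro hmem
    have hconv : Convex ℝ {P : E2 | 0 ≤ P 1 ∧ a * P 1 ≤ h * P 0 ∧ P 0 ≤ a} := by
      intro P hP Q hQ s t hs ht hst
      rw [Set.mem_setOf_eq] at hP hQ
      have e0 : (s • P + t • Q) 0 = s * P 0 + t * Q 0 := rfl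
      have e1 : (s • P + t • Q) 1 = s * P 1 + t * Q 1 := rfl
      refine ⟨?_, ?_, ?_⟩
      · rw [e1]; nlinarith [hP.1, hQ.1]
      · rw [e0, e1]; nlinarith [hP.2.1, hQ.2.1]
      · rw [e0]; nlinarith [hP.2.2, hQ.2.2]
    have hsub : Tri a b ⊆ {P : E2 | 0 ≤ P 1 ∧ a * P 1 ≤ h * P 0 ∧ P 0 ≤ a} := by
      apply convexHull_min _ hconv
      intro P hP
      simp only [Set.mem_insert_iff, Set.mem_singleton_iff] at hP
      have c1 : (pt2 0 0 : E2) 0 = 0 := rfl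
      have c2 : (pt2 0 0 : E2) 1 = 0 := rfl
      have c3 : (pt2 a 0 : E2) 0 = a := rfl
      have c4 : (pt2 a 0 : E2) 1 = 0 := rfl
      have c5 : (pt2 a h : E2) 0 = a := rfl
      have c6 : (pt2 a h : E2) 1 = h := rfl
      rcases hP with rfl | rfl | rfl <;> rw [Set.mem_setOf_eq]
      · rw [c1, c2]; refine ⟨le_refl _, by nlinarith, ha.le⟩
      · rw [c3, c4]; exact ⟨le_refl _, by nlinarith, le_refl _⟩
      · rw [c5, c6]; exact ⟨hhpos.le, by nlinarith, le_refl _⟩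
    exact hsub hmem
  · rintro ⟨hy, hxy, hxa⟩
    have hx0 : 0 ≤ x := by nlinarith
    set w : Fin 3 → ℝ := ![1 - x/a, x/a - y/h, y/h] with hw
    set z : Fin 3 → E2 := ![pt2 0 0, pt2 a 0, pt2 a h] with hz
    have hw0 : ∀ i ∈ Finset.univ, 0 ≤ w i := by
      intro i _
      fin_cases i
      · show (0:ℝ) ≤ 1 - x/a
        rw [sub_nonneg, div_le_one ha]; exact hxa
      · show (0:ℝ) ≤ x/a - y/h
        rw [sub_nonneg, div_le_div_iff₀ hhpos ha]; nlinarith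
      · show (0:ℝ) ≤ y/h
        positivity
    have hsum : ∑ i, w i = 1 := by
      rw [hw, Fin.sum_univ_three]
      show 1 - x/a + (x/a - y/h) + y/h = 1
      ring
    have hzmem : ∀ i ∈ Finset.univ, z i ∈ ({pt2 0 0, pt2 a 0, pt2 a h} : Set E2) := by
      intro i _
      fin_cases i
      · exact Set.mem_insert _ _
      · exact Set.mem_insert_of_mem _ (Set.mem_insert _ _)
      · exact Set.mem_insert_of_mem _ (Set.mem_insert_of_mem _ rfl)
    have hcm := Finset.centerMass_mem_convexHull Finset.univ hw0 (by rw [hsum]; norm_num) hzmem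
    rw [Finset.centerMass_eq_of_sum_1 _ _ hsum] at hcm
    have : ∑ i, w i • z i = pt2 x y := by
      rw [Fin.sum_univ_three]
      ext i
      have eapp : (w 0 • z 0 + w 1 • z 1 + w 2 • z 2) i
          = w 0 * z 0 i + w 1 * z 1 i + w 2 * z 2 i := rfl
      rw [eapp]
      fin_cases i
      · show w 0 * (0:ℝ) + w 1 * a + w 2 * a = x
        show (1 - x/a) * 0 + (x/a - y/h) * a + (y/h) * a = x
        field_simp
        ring
      · show w 0 * (0:ℝ) + w 1 * (0:ℝ) + w 2 * h = y
        show (1 - x/a) * 0 + (x/a - y/h) * 0 + (y/h) * h = y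
        field_simp
        ring
    rw [this] at hcm
    exact hcm

set_option maxHeartbeats 1000000 in
lemma Phi_eq {a b ρ : ℝ} (ha : 0 < a) (hab : a < b) (hρ : 0 < ρ) :
    Phi a b ρ = max (arccos (a/b) - arccos (min 1 (a/ρ))) 0 := by
  have hb : 0 < b := ha.trans hab
  set h := Real.sqrt (b ^ 2 - a ^ 2) with hh
  have hhpos : 0 < h := Real.sqrt_pos.2 (by nlinarith)
  set α := arccos (a/b) with hα
  set θ₀ := arccos (min 1 (a/ρ)) with hθ₀
  have hπ := Real.pi_pos
  have hab1 : 0 < a/b := by positivity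
  have hab2 : a/b < 1 := (div_lt_one hb).2 hab
  have hm1 : 0 < min 1 (a/ρ) := lt_min one_pos (by positivity)
  have hm2 : min 1 (a/ρ) ≤ 1 := min_le_left _ _
  have hα1 : 0 < α := Real.arccos_pos.2 hab2
  have hα2 : α < π/2 := Real.arccos_lt_pi_div_two.2 hab1
  have hθ₀1 : 0 ≤ θ₀ := Real.arccos_nonneg _
  have hθ₀2 : θ₀ < π/2 := Real.arccos_lt_pi_div_two.2 hm1
  have hcosα : cos α = a/b := Real.cos_arccos (by linarith) hab2.le
  have hcosθ₀ : cos θ₀ = min 1 (a/ρ) := Real.cos_arccos (by linarith) hm2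
  have hsinα : sin α = h/b := by
    rw [hα, Real.sin_arccos, show 1 - (a/b)^2 = (b^2 - a^2)/b^2 by field_simp,
      Real.sqrt_div (by nlinarith) _, Real.sqrt_sq hb.le]
  have char : ∀ θ ∈ Set.Ico (0:ℝ) (2*π),
      (pt2 (ρ * cos θ) (ρ * sin θ) ∈ Tri a b ↔ θ ∈ Set.Icc θ₀ α) := by
    intro θ hθ
    obtain ⟨hθl, hθr⟩ := hθ
    rw [mem_Tri ha hab, ← hh]
    constructor
    · rintro ⟨h1, h2, h3⟩
      have hsin : 0 ≤ sin θ := by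
        by_contra hc; push_neg at hc; nlinarith
      have hsθ2 : a * sin θ ≤ h * cos θ := by nlinarith
      have hθπ : θ ≤ π := by
        by_contra hc; push_neg at hc
        have h5 : 0 < sin (θ - π) := Real.sin_pos_of_pos_of_lt_pi (by linarith) (by linarith)
        rw [Real.sin_sub] at h5
        simp only [Real.cos_pi, Real.sin_pi] at h5
        nlinarith
      have hcos : 0 ≤ cos θ := by
        by_contra hc; push_neg at hc; nlinarith
      have hθhalf : θ ≤ π/2 := by
        by_contra hc; push_neg at hc
        have := Real.cos_neg_of_pi_div_two_lt_of_lt hc (by linarith)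
        linarith
      constructor
      · -- θ₀ ≤ θ
        have hcle : cos θ ≤ cos θ₀ := by
          rw [hcosθ₀]
          refine le_min (Real.cos_le_one θ) ?_
          rw [le_div_iff₀ hρ]; linarith
        have := (Real.strictAntiOn_cos.le_iff_ge
          (⟨by linarith, by linarith⟩ : θ₀ ∈ Set.Icc 0 π)
          (⟨hθl, hθπ⟩ : θ ∈ Set.Icc 0 π)).1
        -- cos θ₀ ≥ cos θ... orient
        by_contra hc; push_neg at hc
        have := Real.strictAntiOn_cos (⟨hθl, hθπ⟩ : θ ∈ Set.Icc 0 π)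
          (⟨by linarith, by linarith⟩ : θ₀ ∈ Set.Icc 0 π) hc
        linarith
      · -- θ ≤ α
        by_contra hc; push_neg at hc
        have h5 : 0 < sin (θ - α) :=
          Real.sin_pos_of_pos_of_lt_pi (by linarith) (by linarith)
        rw [Real.sin_sub, hcosα, hsinα] at h5
        have h6 := mul_pos h5 hb
        rw [sub_mul, mul_assoc, mul_assoc, div_mul_cancel₀ _ hb.ne', div_mul_cancel₀ _ hb.ne'] at h6
        ring_nf at h6 hsθ2
        linarith
    · rintro ⟨hθ1, hθ2⟩
      have h0θ : 0 ≤ θ := le_trans hθ₀1 hθ1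
      have hθπ : θ ≤ π := by linarith
      have hsin : 0 ≤ sin θ := Real.sin_nonneg_of_nonneg_of_le_pi h0θ hθπ
      have hcos2 : cos θ ≤ cos θ₀ :=
        Real.cos_le_cos_of_nonneg_of_le_pi hθ₀1 hθπ hθ1
      refine ⟨by positivity, ?_, ?_⟩
      · -- a (ρ sin θ) ≤ h (ρ cos θ)
        have h5 : 0 ≤ sin (α - θ) :=
          Real.sin_nonneg_of_nonneg_of_le_pi (by linarith) (by linarith)
        rw [Real.sin_sub, hcosα, hsinα] at h5
        rw [div_mul_eq_mul_div, div_mul_eq_mul_div, ← sub_div, le_div_iff₀ hb, zero_mul] at h5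
        nlinarith [mul_nonneg h5 hρ.le]
      · have : cos θ ≤ a/ρ := le_trans hcos2 (by rw [hcosθ₀]; exact min_le_right _ _)
        rw [le_div_iff₀ hρ] at this
        nlinarith
  -- now the integral computation
  have hind : ∀ᵐ θ : ℝ, θ ∈ Set.uIoc (0:ℝ) (2*π) →
      (Tri a b).indicator (fun _ => (1:ℝ)) (pt2 (ρ * cos θ) (ρ * sin θ))
      = (Set.Icc θ₀ α).indicator (fun _ => (1:ℝ)) θ := by
    have hnull : volume ({2*π} : Set ℝ) = 0 := volume_singleton
    filter_upwards [measure_eq_zero_iff_ae_notMem.1 hnull] with θ hθ2π hθmem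
    rw [Set.uIoc_of_le (by linarith)] at hθmem
    have hmem' : θ ∈ Set.Ico (0:ℝ) (2*π) := by
      constructor
      · exact hθmem.1.le
      · exact lt_of_le_of_ne hθmem.2 (by simpa using hθ2π)
    by_cases hc : θ ∈ Set.Icc θ₀ α
    · rw [Set.indicator_of_mem hc, Set.indicator_of_mem ((char θ hmem').2 hc)]
    · rw [Set.indicator_of_notMem hc, Set.indicator_of_notMem (fun hm => hc ((char θ hmem').1 hm))]
  have : Phi a b ρ = ∫ θ in (0:ℝ)..(2*π), (Set.Icc θ₀ α).indicator (fun _ => (1:ℝ)) θ :=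
    intervalIntegral.integral_congr_ae hind
  rw [Phi, circTransform] at *
  rw [this, intervalIntegral.integral_of_le (by linarith),
    MeasureTheory.integral_indicator measurableSet_Icc]
  rw [MeasureTheory.setIntegral_const, measureReal_restrict_apply measurableSet_Icc, measureReal_def]
  by_cases hcase : θ₀ ≤ α
  · have hvol : volume (Set.Icc θ₀ α ∩ Set.Ioc 0 (2*π)) = ENNReal.ofReal (α - θ₀) := by
      apply le_antisymm
      · calc volume (Set.Icc θ₀ α ∩ Set.Ioc 0 (2*π)) ≤ volume (Set.Icc θ₀ α) :=
            measure_mono Set.inter_subset_left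
        _ = ENNReal.ofReal (α - θ₀) := Real.volume_Icc
      · have hsub : Set.Ioc θ₀ α ⊆ Set.Icc θ₀ α ∩ Set.Ioc 0 (2*π) := by
          intro x hx
          exact ⟨⟨hx.1.le, hx.2⟩, ⟨lt_of_le_of_lt hθ₀1 hx.1, by linarith [hx.2]⟩⟩
        calc ENNReal.ofReal (α - θ₀) = volume (Set.Ioc θ₀ α) := Real.volume_Ioc.symm
        _ ≤ _ := measure_mono hsub
    rw [hvol, ENNReal.toReal_ofReal (by linarith), smul_eq_mul, mul_one]
    rw [max_eq_left (by linarith)]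
  · push_neg at hcase
    rw [Set.Icc_eq_empty (not_le.2 hcase), Set.empty_inter]
    simp only [measure_empty, ENNReal.toReal_zero, zero_smul]
    rw [max_eq_right (by linarith)]

/-- The family `{Φ_{a,b}}_{0 < a < b}` is linearly independent on `(0, ∞)`: any finite
vanishing linear combination `∑ c_{a,b} Φ_{a,b} ≡ 0` on `(0, ∞)` has all coefficients
zero. -/
theorem stmt_16 (F : Finset (ℝ × ℝ)) (c : ℝ × ℝ → ℝ)
    (hF : ∀ p ∈ F, 0 < p.1 ∧ p.1 < p.2)
    (hzero : ∀ ρ : ℝ, 0 < ρ → ∑ p ∈ F, c p * Phi p.1 p.2 ρ = 0) :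
    ∀ p ∈ F, c p = 0 := by
  classical
  revert hF hzero
  induction F using Finset.strongInduction with
  | _ F ih =>
  intro hF hzero
  rcases F.eq_empty_or_nonempty with rfl | hne
  · simp
  set B := F.sup' hne (fun p => p.2) with hB
  have hBle : ∀ p ∈ F, p.2 ≤ B := fun p hp => Finset.le_sup' _ hp
  obtain ⟨q₀, hq₀F, hq₀B⟩ : ∃ q ∈ F, B = q.2 := by
    obtain ⟨q, hq, he⟩ := Finset.exists_mem_eq_sup' hne (fun p => p.2)
    exact ⟨q, hq, he⟩
  set G := F.filter (fun p => p.2 = B) with hG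
  set L := F.sup' hne (fun p => if p.2 = B then p.1 else p.2) with hL
  have hLB : L < B := by
    rw [hL]
    rw [Finset.sup'_lt_iff]
    intro p hp
    split_ifs with hcond
    · rw [← hcond]; exact (hF p hp).2
    · exact lt_of_le_of_ne (hBle p hp) hcond
  have hLpos : 0 < L := by
    have hle : (if q₀.2 = B then q₀.1 else q₀.2) ≤ L := Finset.le_sup' (fun p => if p.2 = B then p.1 else p.2) hq₀F
    have := hF q₀ hq₀F
    split_ifs at hle
    · linarith [this.1]
    · linarith [this.1, this.2]
  have hBpos : 0 < B := lt_trans hLpos hLB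
  have hL1 : ∀ p ∈ G, p.1 ≤ L := by
    intro p hp
    rw [hG, Finset.mem_filter] at hp
    have hle : (if p.2 = B then p.1 else p.2) ≤ L := Finset.le_sup' (fun p => if p.2 = B then p.1 else p.2) hp.1
    rwa [if_pos hp.2] at hle
  have hL2 : ∀ p ∈ F, ¬ p.2 = B → p.2 ≤ L := by
    intro p hp hpb
    have hle : (if p.2 = B then p.1 else p.2) ≤ L := Finset.le_sup' (fun p => if p.2 = B then p.1 else p.2) hp
    rwa [if_neg hpb] at hle
  -- step 1: on (L, B) the sum over G has explicit arccos form
  have claim1 : ∀ ρ ∈ Set.Ioo L B,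
      ∑ p ∈ G, c p * (arccos (p.1/B) - arccos (p.1/ρ)) = 0 := by
    intro ρ hρ
    have hρpos : 0 < ρ := lt_trans hLpos hρ.1
    have h0 := hzero ρ hρpos
    rw [← Finset.sum_filter_add_sum_filter_not F (fun p => p.2 = B)] at h0
    have hz2 : ∑ p ∈ F.filter (fun p => ¬ p.2 = B), c p * Phi p.1 p.2 ρ = 0 := by
      apply Finset.sum_eq_zero
      intro p hp
      rw [Finset.mem_filter] at hp
      obtain ⟨hpF, hpB⟩ := hp
      obtain ⟨ha, hab⟩ := hF p hpF
      have hbρ : p.2 < ρ := lt_of_le_of_lt (hL2 p hpF hpB) hρ.1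
      rw [Phi_eq ha hab hρpos]
      have h1 : p.1/ρ < p.1/p.2 := by
        apply div_lt_div_of_pos_left ha (lt_trans ha hab) hbρ
      have h2 : p.1/p.2 < 1 := (div_lt_one (lt_trans ha hab)).2 hab
      have hmin : min 1 (p.1/ρ) = p.1/ρ := min_eq_right (by linarith)
      rw [hmin]
      have hle : arccos (p.1/p.2) ≤ arccos (p.1/ρ) := by
        have h3 : (0:ℝ) < p.1/ρ := by positivity
        exact ((Real.strictAntiOn_arccos.le_iff_ge
          ⟨by linarith, h2.le⟩ ⟨by linarith, by linarith⟩).2 h1.le)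
      rw [max_eq_right (by linarith), mul_zero]
    have hz1 : ∑ p ∈ G, c p * Phi p.1 p.2 ρ
        = ∑ p ∈ G, c p * (arccos (p.1/B) - arccos (p.1/ρ)) := by
      apply Finset.sum_congr rfl
      intro p hp
      rw [hG, Finset.mem_filter] at hp
      obtain ⟨hpF, hpB⟩ := hp
      obtain ⟨ha, hab⟩ := hF p hpF
      have haL : p.1 ≤ L := hL1 p (by rw [hG, Finset.mem_filter]; exact ⟨hpF, hpB⟩)
      have haρ : p.1 < ρ := lt_of_le_of_lt haL hρ.1
      rw [Phi_eq ha hab hρpos]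
      have h1 : p.1/ρ < 1 := (div_lt_one hρpos).2 haρ
      have hmin : min 1 (p.1/ρ) = p.1/ρ := min_eq_right h1.le
      rw [hmin, hpB]
      have hρB : ρ < B := hρ.2
      have h2 : p.1/B < p.1/ρ := div_lt_div_of_pos_left ha hρpos hρB
      have h3 : (0:ℝ) < p.1/B := by positivity
      have hle : arccos (p.1/ρ) ≤ arccos (p.1/B) := by
        exact ((Real.strictAntiOn_arccos.le_iff_ge
          ⟨by linarith, h1.le⟩ ⟨by linarith, by linarith⟩).2 h2.le)
      rw [max_eq_left (by linarith)]
    rw [hz2, add_zero, hz1] at h0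
    exact h0
  -- step 2: differentiate
  have claim2 : ∀ ρ ∈ Set.Ioo L B,
      ∑ p ∈ G, (c p * p.1) * (ρ^2 - p.1^2) ^ (-(1/2) : ℝ) = 0 := by
    intro ρ hρ
    have hρpos : 0 < ρ := lt_trans hLpos hρ.1
    set f : ℝ → ℝ := fun y => ∑ p ∈ G, c p * (arccos (p.1/B) - arccos (p.1/y)) with hf
    have hder : HasDerivAt f
        (∑ p ∈ G, c p * -(-(1/Real.sqrt (1-(p.1/ρ)^2)) * (p.1 * -(ρ^2)⁻¹))) ρ := by
      apply HasDerivAt.fun_sum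
      intro p hp
      rw [hG, Finset.mem_filter] at hp
      obtain ⟨hpF, hpB⟩ := hp
      obtain ⟨ha, hab⟩ := hF p hpF
      have haρ : p.1 < ρ := lt_of_le_of_lt (hL1 p (by rw [hG, Finset.mem_filter]; exact ⟨hpF, hpB⟩)) hρ.1
      have hu : HasDerivAt (fun y : ℝ => p.1 / y) (p.1 * -(ρ^2)⁻¹) ρ := by
        have := (hasDerivAt_inv hρpos.ne').const_mul p.1
        simpa [div_eq_mul_inv] using this
      have harg1 : p.1/ρ ≠ -1 := by
        have : (0:ℝ) < p.1/ρ := by positivity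
        linarith
      have harg2 : p.1/ρ ≠ 1 := by
        have : p.1/ρ < 1 := (div_lt_one hρpos).2 haρ
        linarith
      have hcomp : HasDerivAt (fun y : ℝ => arccos (p.1 / y))
          (-(1/Real.sqrt (1-(p.1/ρ)^2)) * (p.1 * -(ρ^2)⁻¹)) ρ := by
        have := (Real.hasDerivAt_arccos harg1 harg2).comp ρ hu
        simpa [Function.comp_def] using this
      exact (hcomp.const_sub (arccos (p.1/B))).const_mul (c p)
    have hzero' : f =ᶠ[nhds ρ] (fun _ => 0) := by
      filter_upwards [isOpen_Ioo.mem_nhds hρ] with y hy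
      exact claim1 y hy
    have hd0 := hzero'.deriv_eq
    rw [hder.deriv] at hd0
    simp only [deriv_const] at hd0
    -- massage termwise
    have hterm : ∀ p ∈ G, c p * -(-(1/Real.sqrt (1-(p.1/ρ)^2)) * (p.1 * -(ρ^2)⁻¹))
        = -ρ⁻¹ * ((c p * p.1) * (ρ^2 - p.1^2) ^ (-(1/2) : ℝ)) := by
      intro p hp
      rw [hG, Finset.mem_filter] at hp
      obtain ⟨hpF, hpB⟩ := hp
      obtain ⟨ha, hab⟩ := hF p hpF
      have haρ : p.1 < ρ := lt_of_le_of_lt (hL1 p (by rw [hG, Finset.mem_filter]; exact ⟨hpF, hpB⟩)) hρ.1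
      have hd : (0:ℝ) < ρ^2 - p.1^2 := by nlinarith
      have e1 : (1 - (p.1/ρ)^2) = (ρ^2 - p.1^2)/ρ^2 := by field_simp
      have e2 : Real.sqrt (1 - (p.1/ρ)^2) = Real.sqrt (ρ^2 - p.1^2) / ρ := by
        rw [e1, Real.sqrt_div hd.le, Real.sqrt_sq hρpos.le]
      have e3 : (ρ^2 - p.1^2) ^ (-(1/2) : ℝ) = (Real.sqrt (ρ^2 - p.1^2))⁻¹ := by
        rw [Real.rpow_neg hd.le, Real.sqrt_eq_rpow]
      have hsq : (0:ℝ) < Real.sqrt (ρ^2 - p.1^2) := Real.sqrt_pos.2 hd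
      rw [e2, e3]
      field_simp
    rw [Finset.sum_congr rfl hterm, ← Finset.mul_sum] at hd0
    have hne : (-ρ⁻¹ : ℝ) ≠ 0 := by
      simp only [ne_eq, neg_eq_zero, inv_eq_zero]
      exact hρpos.ne'
    exact (mul_eq_zero.1 hd0).resolve_left hne
  -- step 3: apply key lemma
  have hinj : Set.InjOn (fun p : ℝ × ℝ => p.1^2) G := by
    intro p hp q hq hpq
    simp only at hpq
    rw [hG, Finset.coe_filter] at hp hq
    obtain ⟨hpF, hpB⟩ := hp
    obtain ⟨hqF, hqB⟩ := hq
    have hp1 : 0 < p.1 := (hF p hpF).1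
    have hq1 : 0 < q.1 := (hF q hqF).1
    have : p.1 = q.1 := by
      have := congrArg Real.sqrt hpq
      rwa [Real.sqrt_sq hp1.le, Real.sqrt_sq hq1.le] at this
    exact Prod.ext this (by rw [hpB, hqB])
  have hkey := key G (fun p => c p * p.1) (fun p => p.1^2) hinj
    (show L^2 < B^2 by nlinarith)
    (by
      intro p hp
      have hple := hL1 p hp
      have hp1 : 0 < p.1 := (hF p (Finset.mem_of_mem_filter p hp)).1
      show p.1^2 ≤ L^2
      nlinarith)
    (by
      intro t ht
      obtain ⟨ht1, ht2⟩ := ht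
      have htpos : 0 < t := lt_trans (by positivity) ht1
      set ρ := Real.sqrt t with hρ
      have hρL : L < ρ := by
        rw [hρ, show L = Real.sqrt (L^2) from (Real.sqrt_sq hLpos.le).symm]
        exact Real.sqrt_lt_sqrt (by positivity) ht1
      have hρB : ρ < B := by
        rw [hρ, show B = Real.sqrt (B^2) from (Real.sqrt_sq hBpos.le).symm]
        exact Real.sqrt_lt_sqrt htpos.le ht2
      have := claim2 ρ ⟨hρL, hρB⟩
      rwa [hρ, Real.sq_sqrt htpos.le] at this)
  have hcG : ∀ p ∈ G, c p = 0 := by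
    intro p hp
    have hp1 : 0 < p.1 := (hF p (Finset.mem_of_mem_filter p hp)).1
    have := hkey p hp
    exact (mul_eq_zero.1 this).resolve_right hp1.ne'
  -- step 4: induct on the rest
  set F' := F.filter (fun p => ¬ p.2 = B) with hF'
  have hss : F' ⊂ F := by
    rw [hF', Finset.filter_ssubset]
    exact ⟨q₀, hq₀F, by simp [← hq₀B]⟩
  have hzero'' : ∀ ρ : ℝ, 0 < ρ → ∑ p ∈ F', c p * Phi p.1 p.2 ρ = 0 := by
    intro ρ hρ
    have h0 := hzero ρ hρ
    rw [← Finset.sum_filter_add_sum_filter_not F (fun p => p.2 = B)] at h0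
    have : ∑ p ∈ F.filter (fun p => p.2 = B), c p * Phi p.1 p.2 ρ = 0 := by
      apply Finset.sum_eq_zero
      intro p hp
      rw [hcG p (by rwa [hG]), zero_mul]
    rw [this, zero_add] at h0
    exact h0
  have hrest := ih F' hss (fun p hp => hF p (Finset.mem_of_mem_filter p hp)) hzero''
  intro p hp
  by_cases hpB : p.2 = B
  · exact hcG p (by rw [hG, Finset.mem_filter]; exact ⟨hp, hpB⟩)
  · exact hrest p (by rw [hF', Finset.mem_filter]; exact ⟨hp, hpB⟩)
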